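/- Let F: ℝⁿ → ℝⁿ be L-Lipschitz with L > 1. Suppose an auxiliary sequence (s̃_t) satisfies: (1) one-step consistency ‖s̃_{t+1} − F(s̃_t)‖ ≤ δ for all t < T, and (2) deviation from the demonstration ‖s_t − s̃_t‖ ≤ κ for all t ≤ T, with s̃_0 = s_0. Then the rollout (ŝ_t) of F from s_0 satisfies ∑_{t=0}^{T} ‖ŝ_t − s_t‖ ≤ κ·T + δ·(L^{T+1} − (T+1)·L + T)/(L − 1)². -/

import Mathlib

/-- Main CoDE theorem (Theorem 2): with auxiliary trajectory `s̃` satisfying a one-step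
consistency bound `δ` and deviation bound `κ` from the demonstration, the rollout of
the policy satisfies `∑_{t=0}^{T} ‖shat_t − s_t‖ ≤ κ·T + δ·(L^{T+1} − (T+1)·L + T)/(L−1)²`. -/
theorem code_main_bound {E : Type*} [NormedAddCommGroup E]
    (F : E → E) (L δ κ : ℝ) (hL : 1 < L)
    (hLip : ∀ s s' : E, ‖F s - F s'‖ ≤ L * ‖s - s'‖)
    (T : ℕ) (s stilde shat : ℕ → E)
    (hone : ∀ t : ℕ, t < T → ‖stilde (t + 1) - F (stilde t)‖ ≤ δ)
    (hdev : ∀ t : ℕ, t ≤ T → ‖s t - stilde t‖ ≤ κ)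
    (htilde0 : stilde 0 = s 0)
    (h0 : shat 0 = s 0) (hrec : ∀ t : ℕ, shat (t + 1) = F (shat t)) :
    ∑ t ∈ Finset.range (T + 1), ‖shat t - s t‖ ≤
      κ * (T : ℝ) + δ * (L ^ (T + 1) - (T + 1 : ℝ) * L + (T : ℝ)) / (L - 1) ^ 2 := by
  have hL1 : (0:ℝ) < L - 1 := by linarith
  have hLne : L ≠ 1 := by linarith
  have hκ : 0 ≤ κ := by
    have h := hdev 0 (Nat.zero_le T)
    rw [htilde0] at h
    simpa using h
  have key : ∀ t : ℕ, t ≤ T → ‖shat t - stilde t‖ ≤ δ * (L ^ t - 1) / (L - 1) := by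
    intro t
    induction t with
    | zero => intro _; simp [h0, htilde0]
    | succ t ih =>
      intro ht
      have htT : t < T := ht
      have ihb := ih (le_of_lt htT)
      have hδ : 0 ≤ δ := le_trans (norm_nonneg _) (hone t htT)
      have hstep : ‖shat (t+1) - stilde (t+1)‖ ≤
          ‖F (shat t) - F (stilde t)‖ + ‖stilde (t+1) - F (stilde t)‖ := by
        have heq : shat (t+1) - stilde (t+1) =
            (F (shat t) - F (stilde t)) - (stilde (t+1) - F (stilde t)) := by
          rw [hrec]; abel
        rw [heq]
        exact norm_sub_le _ _
      have h1 : ‖F (shat t) - F (stilde t)‖ ≤ L * (δ * (L ^ t - 1) / (L - 1)) :=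
        le_trans (hLip _ _) (by
          have hL0 : (0:ℝ) ≤ L := by linarith
          exact mul_le_mul_of_nonneg_left ihb hL0)
      have h2 := hone t htT
      have hfin : L * (δ * (L ^ t - 1) / (L - 1)) + δ = δ * (L ^ (t+1) - 1) / (L - 1) := by
        field_simp
        ring
      linarith [hstep, h1, h2]
  -- pointwise triangle inequality
  have htri : ∀ t : ℕ, t ≤ T →
      ‖shat t - s t‖ ≤ ‖s t - stilde t‖ + δ * (L ^ t - 1) / (L - 1) := by
    intro t ht
    have heq : shat t - s t = (shat t - stilde t) - (s t - stilde t) := by abel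
    calc ‖shat t - s t‖ ≤ ‖shat t - stilde t‖ + ‖s t - stilde t‖ := by
          rw [heq]; exact norm_sub_le _ _
      _ ≤ ‖s t - stilde t‖ + δ * (L ^ t - 1) / (L - 1) := by
          linarith [key t ht]
  have hsum : ∑ t ∈ Finset.range (T + 1), ‖shat t - s t‖ ≤
      ∑ t ∈ Finset.range (T + 1), (‖s t - stilde t‖ + δ * (L ^ t - 1) / (L - 1)) := by
    apply Finset.sum_le_sum
    intro t htm
    exact htri t (Nat.lt_succ_iff.mp (Finset.mem_range.mp htm))
  rw [Finset.sum_add_distrib] at hsum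
  -- bound the κ part
  have hκsum : ∑ t ∈ Finset.range (T + 1), ‖s t - stilde t‖ ≤ κ * T := by
    rw [Finset.sum_range_succ']
    have h0' : ‖s 0 - stilde 0‖ = 0 := by rw [htilde0]; simp
    rw [h0', add_zero]
    calc ∑ i ∈ Finset.range T, ‖s (i+1) - stilde (i+1)‖
        ≤ ∑ _i ∈ Finset.range T, κ := by
          apply Finset.sum_le_sum
          intro i hi
          exact hdev (i+1) (Nat.succ_le_of_lt (Finset.mem_range.mp hi))
      _ = κ * T := by rw [Finset.sum_const, Finset.card_range]; push_cast; ring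
  -- compute the δ part
  have hδsum : ∑ t ∈ Finset.range (T + 1), δ * (L ^ t - 1) / (L - 1) =
      δ * (L ^ (T + 1) - (T + 1 : ℝ) * L + (T : ℝ)) / (L - 1) ^ 2 := by
    have hgeom : ∑ t ∈ Finset.range (T + 1), L ^ t = (L ^ (T + 1) - 1) / (L - 1) :=
      geom_sum_eq hLne (T + 1)
    have : ∑ t ∈ Finset.range (T + 1), δ * (L ^ t - 1) / (L - 1)
        = (δ / (L - 1)) * ((∑ t ∈ Finset.range (T + 1), L ^ t) - (T + 1 : ℝ)) := by
      have hpt : ∀ t : ℕ, δ * (L ^ t - 1) / (L - 1)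
          = δ / (L - 1) * L ^ t - δ / (L - 1) := by
        intro t; field_simp
      simp_rw [hpt]
      rw [Finset.sum_sub_distrib, ← Finset.mul_sum, Finset.sum_const, Finset.card_range]
      push_cast
      ring
    rw [this, hgeom]
    field_simp
    push_cast
    ring
  linarith [hsum, hκsum, hδsum.le, hδsum.ge]
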